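/- arXiv:math/0410313 — 8 statements merged into one kernel-verified Lean document; each statement's English description precedes it below -/
import Mathlib

section
/- For any subsequence (i_1,…,i_k) of (1,…,n) there exists an element in the Hurwitz orbit of (s_1,…,s_n) whose first k entries are (s_{i_1},…,s_{i_k}). -/
/-- The Hurwitz generator `σ_i` acting on tuples in `G^n` (0-indexed). -/
def hurwitzSigma {G : Type*} [Group G] {n : ℕ} (i : ℕ) (hi : i + 1 < n)
    (s : Fin n → G) : Fin n → G := fun j =>
  if j.val = i then s ⟨i + 1, hi⟩
  else if j.val = i + 1 then (s ⟨i + 1, hi⟩)⁻¹ * s ⟨i, by omega⟩ * s ⟨i + 1, hi⟩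
  else s j

/-- One Hurwitz move (a generator or its inverse). -/
def hurwitzRel {G : Type*} [Group G] {n : ℕ} (s t : Fin n → G) : Prop :=
  ∃ (i : ℕ) (hi : i + 1 < n), t = hurwitzSigma i hi s ∨ s = hurwitzSigma i hi t

/-- The Hurwitz orbit of a tuple: everything reachable by braid group elements. -/
def hurwitzOrbit {G : Type*} [Group G] {n : ℕ} (s : Fin n → G) : Set (Fin n → G) :=
  {t | Relation.ReflTransGen hurwitzRel s t}

/-- We can move the entry at position `j + d` to position `j`, changing only
positions in `[j, j+d]`. -/
lemma hurwitz_moveLeft {G : Type*} [Group G] {n : ℕ} (d : ℕ) :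
    ∀ (j : ℕ) (t : Fin n → G) (hi : j + d < n),
    ∃ t' ∈ hurwitzOrbit t, t' ⟨j, by omega⟩ = t ⟨j + d, hi⟩ ∧
      (∀ p : Fin n, p.val < j → t' p = t p) ∧ (∀ p : Fin n, j + d < p.val → t' p = t p) := by
  induction d with
  | zero =>
      intro j t hi
      exact ⟨t, Relation.ReflTransGen.refl, rfl, fun _ _ => rfl, fun _ _ => rfl⟩
  | succ d ih =>
      intro j t hi
      set u := hurwitzSigma (j + d) (by omega) t with hu
      obtain ⟨t', ht'orb, ht'j, ht'lt, ht'gt⟩ := ih j u (by omega)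
      refine ⟨t', Relation.ReflTransGen.head ⟨j + d, by omega, Or.inl hu⟩ ht'orb, ?_, ?_, ?_⟩
      · rw [ht'j]
        simp [hu, hurwitzSigma]
        rfl
      · intro p hp
        rw [ht'lt p hp]
        simp only [hu, hurwitzSigma]
        rw [if_neg (by omega), if_neg (by omega)]
      · intro p hp
        rw [ht'gt p (by omega)]
        simp only [hu, hurwitzSigma]
        rw [if_neg (by omega), if_neg (by omega)]

/-- For any subsequence `(i_1,…,i_k)` of `(1,…,n)` there is an element of the
Hurwitz orbit of `s` whose first `k` entries are `(s_{i_1},…,s_{i_k})`. -/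
theorem hurwitz_orbit_subsequence {G : Type*} [Group G] {n k : ℕ} (hk : k ≤ n)
    (s : Fin n → G) (ι : Fin k → Fin n) (hι : StrictMono ι) :
    ∃ t ∈ hurwitzOrbit s, ∀ j : Fin k, t ⟨j.val, lt_of_lt_of_le j.isLt hk⟩ = s (ι j) := by
  have hge : ∀ m (hm : m < k), m ≤ (ι ⟨m, hm⟩).val := by
    intro m
    induction m with
    | zero => intro _; exact Nat.zero_le _
    | succ m ihm =>
        intro hm
        have h1 := ihm (by omega)
        have h2 : ι ⟨m, by omega⟩ < ι ⟨m + 1, hm⟩ := hι (by simp [Fin.lt_def])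
        rw [Fin.lt_def] at h2
        omega
  have key : ∀ m, m ≤ k → ∃ t ∈ hurwitzOrbit s,
      (∀ j : Fin k, j.val < m → t ⟨j.val, lt_of_lt_of_le j.isLt hk⟩ = s (ι j)) ∧
      (∀ p : Fin n, (∀ j : Fin k, j.val < m → (ι j).val < p.val) → t p = s p) := by
    intro m
    induction m with
    | zero =>
        intro _
        exact ⟨s, Relation.ReflTransGen.refl, fun j hj => by omega, fun p _ => rfl⟩
    | succ m ihm =>
        intro hm
        obtain ⟨t, htorb, ht1, ht2⟩ := ihm (by omega)
        have hmk : m < k := by omega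
        have hge' : m ≤ (ι ⟨m, hmk⟩).val := hge m hmk
        have hlt : (ι ⟨m, hmk⟩).val < n := (ι ⟨m, hmk⟩).isLt
        obtain ⟨t', ht'orb, ht'j, ht'lt, ht'gt⟩ :=
          hurwitz_moveLeft ((ι ⟨m, hmk⟩).val - m) m t (by omega)
        have hval : t ⟨m + ((ι ⟨m, hmk⟩).val - m), by omega⟩ = s (ι ⟨m, hmk⟩) := by
          have : (⟨m + ((ι ⟨m, hmk⟩).val - m), by omega⟩ : Fin n) = ι ⟨m, hmk⟩ :=
            Fin.ext (show m + ((ι ⟨m, hmk⟩).val - m) = (ι ⟨m, hmk⟩).val by omega)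
          rw [this]
          exact ht2 _ (fun j hj => by
            have := hι (show j < (⟨m, hmk⟩ : Fin k) from by rw [Fin.lt_def]; exact hj)
            rw [Fin.lt_def] at this
            exact this)
        refine ⟨t', htorb.trans ht'orb, ?_, ?_⟩
        · intro j hj
          rcases Nat.lt_or_ge j.val m with h | h
          · rw [ht'lt _ h]
            exact ht1 j h
          · have hjm : j.val = m := by omega
            have : j = ⟨m, hmk⟩ := by ext; exact hjm
            subst this
            rw [show (⟨(⟨m, hmk⟩ : Fin k).val, lt_of_lt_of_le (Fin.isLt _) hk⟩ : Fin n)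
              = ⟨m, by omega⟩ from rfl]
            rw [ht'j]
            exact hval
        · intro p hp
          have hpgt : (ι ⟨m, hmk⟩).val < p.val := hp ⟨m, hmk⟩ (Nat.lt_succ_self m)
          rw [ht'gt p (by omega)]
          exact ht2 p (fun j hj => hp j (by omega))
  obtain ⟨t, htorb, ht1, _⟩ := key k le_rfl
  exact ⟨t, htorb, fun j => ht1 j j.isLt⟩
end

section
/- If the Hurwitz orbit of (s_1,…,s_n) ∈ G^n is finite, then some positive power of c = s_1 ⋯ s_n is central in the subgroup of G generated by s_1,…,s_n. -/
namespace HurwitzAux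

variable {G : Type*} [Group G] {n : ℕ}

/-- Product of the tuple. -/
def P (t : Fin n → G) : G := (List.ofFn t).prod

/-- Extension of a tuple to `ℕ`. -/
def ext' (t : Fin n → G) (k : ℕ) : G := if h : k < n then t ⟨k, h⟩ else 1

def wprod (t : Fin n → G) (j : ℕ) : G := ((List.range j).map (fun k => ext' t (k+1))).prod

def chainU (t : Fin n → G) (j : ℕ) : Fin n → G := fun i =>
  if i.val < j then ext' t (i.val+1)
  else if i.val = j then (wprod t j)⁻¹ * ext' t 0 * wprod t j
  else t i

def rot (t : Fin n → G) : Fin n → G := chainU t (n-1)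

lemma sigma_prod (i : ℕ) (hi : i + 1 < n) (t : Fin n → G) :
    P (hurwitzSigma i hi t) = P t := by
  unfold P
  have key : ∀ (u : Fin n → G),
      (List.ofFn u).prod = ((List.ofFn u).take i).prod *
        (u ⟨i, by omega⟩ * (u ⟨i+1, hi⟩ * ((List.ofFn u).drop (i+2)).prod)) := by
    intro u
    conv_lhs => rw [← List.prod_take_mul_prod_drop (List.ofFn u) i]
    rw [List.drop_eq_getElem_cons (by simp; omega), List.drop_eq_getElem_cons (by simp; omega)]
    simp [mul_assoc]
  rw [key, key]
  have htake : (List.ofFn (hurwitzSigma i hi t)).take i = (List.ofFn t).take i := by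
    apply List.ext_getElem
    · simp
    · intro j h1 h2
      have hj : j < i := by simp at h1; omega
      simp only [List.getElem_take, List.getElem_ofFn, hurwitzSigma]
      rw [if_neg (by omega), if_neg (by omega)]
  have hdrop : (List.ofFn (hurwitzSigma i hi t)).drop (i+2) = (List.ofFn t).drop (i+2) := by
    apply List.ext_getElem
    · simp
    · intro j h1 h2
      simp only [List.getElem_drop, List.getElem_ofFn, hurwitzSigma]
      rw [if_neg (by omega), if_neg (by omega)]
  rw [htake, hdrop]
  have hmid : hurwitzSigma i hi t ⟨i, by omega⟩ * hurwitzSigma i hi t ⟨i+1, hi⟩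
      = t ⟨i, by omega⟩ * t ⟨i+1, hi⟩ := by
    simp [hurwitzSigma]
    group
  rw [← mul_assoc, ← mul_assoc, mul_assoc _ _ (hurwitzSigma i hi t ⟨i+1, hi⟩), hmid]
  group

lemma orbit_prod {t u : Fin n → G} (h : Relation.ReflTransGen hurwitzRel t u) : P u = P t := by
  induction h with
  | refl => rfl
  | tail _ hrel ih =>
    obtain ⟨i, hi, hcase⟩ := hrel
    cases hcase with
    | inl e => rw [e, sigma_prod, ih]
    | inr e => rw [← ih, e, sigma_prod]

lemma chainU_zero (t : Fin n → G) : chainU t 0 = t := by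
  funext i
  have hn : 0 < n := Nat.lt_of_le_of_lt (Nat.zero_le _) i.isLt
  simp only [chainU, wprod, List.range_zero, List.map_nil, List.prod_nil,
    Nat.not_lt_zero, if_false]
  rcases eq_or_ne i.val 0 with h | h
  · rw [if_pos h, ext', dif_pos hn, inv_one, one_mul, mul_one]
    exact congrArg t (Fin.ext h.symm)
  · rw [if_neg h]

lemma wprod_succ (t : Fin n → G) (j : ℕ) :
    wprod t (j+1) = wprod t j * ext' t (j+1) := by
  simp [wprod, List.range_succ]

lemma chainU_succ (t : Fin n → G) (j : ℕ) (hj : j + 1 < n) :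
    chainU t (j+1) = hurwitzSigma j hj (chainU t j) := by
  have hext : ext' t (j+1) = t ⟨j+1, hj⟩ := by rw [ext', dif_pos hj]
  funext i
  rcases lt_trichotomy i.val j with h | h | h
  · have e1 : i.val < j+1 := by omega
    have e2 : ¬ i.val = j := by omega
    have e3 : ¬ i.val = j+1 := by omega
    simp only [hurwitzSigma, chainU, if_pos e1, if_pos h, if_neg e2, if_neg e3]
  · have e1 : i.val < j + 1 := by omega
    have f1 : ¬ ((⟨j+1, hj⟩ : Fin n).val < j) := by simp
    have f2 : ¬ ((⟨j+1, hj⟩ : Fin n).val = j) := by simp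
    simp only [hurwitzSigma, chainU, if_pos e1, if_pos h, if_neg f1, if_neg f2]
    rw [h, hext]
  · rcases Nat.eq_or_lt_of_le h with h2 | h2
    · have e1 : ¬ i.val < j+1 := by omega
      have e2 : i.val = j+1 := by omega
      have e3 : ¬ i.val = j := by omega
      have f1 : ¬ ((⟨j+1, hj⟩ : Fin n).val < j) := by simp
      have f2 : ¬ ((⟨j+1, hj⟩ : Fin n).val = j) := by simp
      have g1 : ¬ ((⟨j, by omega⟩ : Fin n).val < j) := by simp
      have g2 : ((⟨j, by omega⟩ : Fin n).val = j) := rfl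
      simp only [hurwitzSigma, chainU, if_neg e1, if_pos e2, if_neg e3, if_neg f1,
        if_neg f2, if_neg g1, if_pos g2, if_true, wprod_succ, hext]
      group
    · have e1 : ¬ i.val < j+1 := by omega
      have e2 : ¬ i.val = j+1 := by omega
      have e3 : ¬ i.val = j := by omega
      have e4 : ¬ i.val < j := by omega
      simp only [hurwitzSigma, chainU, if_neg e1, if_neg e2, if_neg e3, if_neg e4]

lemma chainU_mem (t : Fin n → G) : ∀ j, j < n →
    Relation.ReflTransGen hurwitzRel t (chainU t j) := by
  intro j
  induction j with
  | zero => intro _; rw [chainU_zero]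
  | succ j ih =>
    intro hj
    refine Relation.ReflTransGen.tail (ih (by omega)) ?_
    exact ⟨j, hj, Or.inl (chainU_succ t j hj)⟩

lemma rot_mem (t : Fin n → G) : Relation.ReflTransGen hurwitzRel t (rot t) := by
  rcases Nat.eq_zero_or_pos n with h | h
  · have : rot t = t := funext fun i => absurd i.isLt (by omega)
    rw [this]
  · exact chainU_mem t (n-1) (by omega)

lemma P_decomp (t : Fin n → G) (hn : 0 < n) : P t = ext' t 0 * wprod t (n-1) := by
  have h1 : List.ofFn t = (List.range n).map (ext' t) := by
    apply List.ext_getElem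
    · simp
    · intro j h1 h2
      simp at h1
      simp [ext', h1]
  have h2 : List.range n = 0 :: (List.range (n-1)).map Nat.succ := by
    conv_lhs => rw [show n = (n-1)+1 by omega]
    exact List.range_succ_eq_map
  rw [P, h1, h2]
  simp [wprod, List.map_map, Function.comp_def, Nat.succ_eq_add_one]

lemma rot_eq (t : Fin n → G) : rot t = fun i =>
    if h : i.val + 1 < n then t ⟨i.val+1, h⟩
    else (P t)⁻¹ * t ⟨0, Nat.lt_of_le_of_lt (Nat.zero_le _) i.isLt⟩ * P t := by
  funext i
  have hn : 0 < n := Nat.lt_of_le_of_lt (Nat.zero_le _) i.isLt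
  simp only [rot, chainU]
  rcases Nat.lt_or_ge i.val (n-1) with h | h
  · have h1 : i.val + 1 < n := by omega
    simp [h, h1, ext']
  · have h1 : i.val = n - 1 := by have := i.isLt; omega
    have h2 : ¬ i.val < n - 1 := by omega
    have h3 : ¬ i.val + 1 < n := by omega
    rw [dif_neg h3]
    simp only [if_neg h2, if_pos h1]
    rw [P_decomp t hn, show ext' t 0 = t ⟨0, hn⟩ from by rw [ext', dif_pos hn]]
    group

lemma rot_iter_mem (t : Fin n → G) : ∀ m, Relation.ReflTransGen hurwitzRel t (rot^[m] t) := by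
  intro m
  induction m with
  | zero => exact Relation.ReflTransGen.refl
  | succ m ih =>
    rw [Function.iterate_succ_apply']
    exact Relation.ReflTransGen.trans ih (rot_mem _)

lemma rot_iter_eq (t : Fin n → G) : ∀ k (hk : k ≤ n), rot^[k] t = fun i =>
    if h : i.val + k < n then t ⟨i.val + k, h⟩
    else (P t)⁻¹ * t ⟨i.val + k - n, by have := i.isLt; omega⟩ * P t := by
  intro k
  induction k with
  | zero => intro _; funext i; simp
  | succ k ih =>
    intro hk
    have hP : P (rot^[k] t) = P t := orbit_prod (rot_iter_mem t k)
    rw [Function.iterate_succ_apply', rot_eq, hP, ih (by omega)]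
    funext i
    rcases Nat.lt_or_ge (i.val + 1) n with h | h
    · simp only [h, dif_pos]
      rcases Nat.lt_or_ge (i.val + (k+1)) n with h2 | h2
      · have h3 : i.val + 1 + k < n := by omega
        simp only [Fin.val_mk, h3, dif_pos, h2, dif_pos]
        exact congrArg t (Fin.ext (by simp only [Fin.val_mk]; omega))
      · have h3 : ¬ i.val + 1 + k < n := by omega
        simp only [Fin.val_mk, h3, dif_neg, h2, Nat.not_lt.mpr h2, dif_neg]
        exact congrArg (fun z => (P t)⁻¹ * t z * P t) (Fin.ext (by simp only [Fin.val_mk]; omega))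
    · have h1 : ¬ i.val + 1 < n := by omega
      have h2 : ¬ i.val + (k+1) < n := by omega
      have h3 : 0 + k < n := by have := i.isLt; omega
      simp only [Fin.val_mk, h1, dif_neg, h2, h3, dif_pos]
      exact congrArg (fun z => (P t)⁻¹ * t z * P t) (Fin.ext (by simp only [Fin.val_mk]; have := i.isLt; omega))

lemma rot_iter_n (t : Fin n → G) : rot^[n] t = fun i => (P t)⁻¹ * t i * P t := by
  rw [rot_iter_eq t n le_rfl]
  funext i
  have h : ¬ i.val + n < n := by omega
  simp only [h, dif_neg]
  exact congrArg (fun z => (P t)⁻¹ * t z * P t) (Fin.ext (by simp only [Fin.val_mk]; omega))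

lemma P_conj (c : G) (t : Fin n → G) : P (fun i => c⁻¹ * t i * c) = c⁻¹ * P t * c := by
  have h : ∀ l : List G, (l.map (fun x => c⁻¹ * x * c)).prod = c⁻¹ * l.prod * c := by
    intro l
    induction l with
    | nil => simp
    | cons a l ih =>
      simp only [List.map_cons, List.prod_cons, ih]
      group
  have : List.ofFn (fun i => c⁻¹ * t i * c) = (List.ofFn t).map (fun x => c⁻¹ * x * c) := by
    rw [List.map_ofFn]; rfl
  rw [P, this, h]; rfl

end HurwitzAux

open HurwitzAux in
/-- If the Hurwitz orbit of `(s_1,…,s_n)` is finite then some positive power of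
`c = s_1 ⋯ s_n` is central in the subgroup generated by the `s_i`. -/
theorem hurwitz_finite_orbit_central_power {G : Type*} [Group G] {n : ℕ}
    (s : Fin n → G) (hfin : (hurwitzOrbit s).Finite) :
    ∃ m : ℕ, 0 < m ∧ ∀ g ∈ Subgroup.closure (Set.range s),
      Commute ((List.ofFn s).prod ^ m) g := by
  set c := (List.ofFn s).prod with hc
  have hcP : c = P s := rfl
  set seq : ℕ → (Fin n → G) := fun k => fun i => (c ^ k)⁻¹ * s i * c ^ k with hseq
  have hPseq : ∀ k, P (seq k) = c := by
    intro k
    rw [hseq]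
    simp only
    rw [P_conj (c^k) s, ← hcP]
    group
  have hmem : ∀ k, seq k ∈ hurwitzOrbit s := by
    intro k
    induction k with
    | zero =>
      have : seq 0 = s := by funext i; simp [hseq]
      rw [this]; exact Relation.ReflTransGen.refl
    | succ k ih =>
      have h1 : rot^[n] (seq k) = seq (k+1) := by
        rw [rot_iter_n, hPseq k]
        funext i
        simp [hseq, pow_succ, mul_assoc]
      have := Relation.ReflTransGen.trans ih (rot_iter_mem (seq k) n)
      rwa [h1] at this
  -- pigeonhole
  have hinj : ∃ k l : ℕ, k ≠ l ∧ seq k = seq l := by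
    have h := Set.infinite_univ (α := ℕ)
    obtain ⟨k, -, l, -, hne, heq⟩ :=
      h.exists_ne_map_eq_of_mapsTo (f := seq) (t := hurwitzOrbit s)
        (fun k _ => hmem k) hfin
    exact ⟨k, l, hne, heq⟩
  obtain ⟨k, l, hne, heq⟩ := hinj
  wlog hkl : k < l generalizing k l
  · exact this l k hne.symm heq.symm (by omega)
  refine ⟨l - k, by omega, ?_⟩
  have hcomm : ∀ i, Commute (c ^ (l - k)) (s i) := by
    intro i
    have h1 : (c ^ k)⁻¹ * s i * c ^ k = (c ^ l)⁻¹ * s i * c ^ l := congrFun heq i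
    have h2 : c ^ l = c ^ (l - k) * c ^ k := by rw [← pow_add]; congr 1; omega
    show c ^ (l - k) * s i = s i * c ^ (l - k)
    calc c ^ (l-k) * s i
        = c^(l-k) * (c^k * ((c^k)⁻¹ * s i * c^k) * (c^k)⁻¹) := by group
      _ = c^(l-k) * (c^k * ((c^l)⁻¹ * s i * c^l) * (c^k)⁻¹) := by rw [h1]
      _ = c^(l-k) * c^k * (c^l)⁻¹ * s i * (c^l * (c^k)⁻¹) := by group
      _ = c^l * (c^l)⁻¹ * s i * (c^l * (c^k)⁻¹) := by rw [← h2]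
      _ = s i * (c^l * (c^k)⁻¹) := by group
      _ = s i * (c^(l-k) * c^k * (c^k)⁻¹) := by rw [h2]
      _ = s i * c^(l-k) := by group
  intro g hg
  induction hg using Subgroup.closure_induction with
  | mem x hx => obtain ⟨i, rfl⟩ := hx; exact hcomm i
  | one => exact Commute.one_right _
  | mul x y _ _ hx hy => exact hx.mul_right hy
  | inv x _ hx => exact hx.inv_right
end

section
/- If the Hurwitz orbit of (s_1,…,s_n) ∈ G^n is finite, then for every subsequence (i_1,…,i_k) of (1,…,n) there exists a positive power of the product s_{i_1} s_{i_2} ⋯ s_{i_k} that commutes with each of s_{i_1},…,s_{i_k}. -/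
namespace HWaux

variable {G : Type*} [Group G]

lemma self_mem {n : ℕ} (s : Fin n → G) : s ∈ hurwitzOrbit s := Relation.ReflTransGen.refl

lemma orbit_trans {n : ℕ} {s t u : Fin n → G} (h1 : t ∈ hurwitzOrbit s)
    (h2 : u ∈ hurwitzOrbit t) : u ∈ hurwitzOrbit s := Relation.ReflTransGen.trans h1 h2

lemma sigma_mem {n : ℕ} (i : ℕ) (hi : i + 1 < n) (t : Fin n → G) :
    hurwitzSigma i hi t ∈ hurwitzOrbit t :=
  Relation.ReflTransGen.single ⟨i, hi, Or.inl rfl⟩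

lemma tcongr {n : ℕ} (t : Fin n → G) {a b : ℕ} {ha : a < n} {hb : b < n} (h : a = b) :
    t ⟨a, ha⟩ = t ⟨b, hb⟩ := by subst h; rfl

/-- Sweeping entry `p` to the end of the tuple. -/
lemma sweep (d : ℕ) : ∀ {n : ℕ} (t : Fin n → G) (p : ℕ) (hpd : p + d + 1 = n),
    (fun j : Fin n => if j.val < p then t j
      else if h : j.val + 1 < n then t ⟨j.val + 1, h⟩
      else (List.ofFn fun i : Fin d => t ⟨p + 1 + i.val, by omega⟩).prod⁻¹ *
          t ⟨p, by omega⟩ *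
          (List.ofFn fun i : Fin d => t ⟨p + 1 + i.val, by omega⟩).prod)
      ∈ hurwitzOrbit t := by
  induction d with
  | zero =>
    intro n t p hpd
    have he : (fun j : Fin n => if j.val < p then t j
        else if h : j.val + 1 < n then t ⟨j.val + 1, h⟩
        else (List.ofFn fun i : Fin 0 => t ⟨p + 1 + i.val, by omega⟩).prod⁻¹ *
            t ⟨p, by omega⟩ *
            (List.ofFn fun i : Fin 0 => t ⟨p + 1 + i.val, by omega⟩).prod) = t := by
      funext j
      split_ifs with h1 h2
      · rfl
      · omega
      · simp only [List.ofFn_zero, List.prod_nil, inv_one, one_mul, mul_one]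
        exact tcongr t (by omega)
    rw [he]
    exact self_mem t
  | succ d ih =>
    intro n t p hpd
    have hp1 : p + 1 < n := by omega
    have h2 := ih (hurwitzSigma p hp1 t) (p + 1) (by omega)
    refine orbit_trans (sigma_mem p hp1 t) ?_
    convert h2 using 2 with j
    by_cases h1 : j.val < p
    · simp only [h1, if_pos, if_pos (show j.val < p + 1 by omega)]
      simp only [hurwitzSigma]
      rw [if_neg (by omega), if_neg (by omega)]
    by_cases h2 : j.val = p
    · rw [if_neg h1, if_pos (show j.val < p + 1 by omega)]
      rw [dif_pos (show j.val + 1 < n by omega)]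
      simp only [hurwitzSigma]
      rw [if_pos h2]
      exact tcongr t (by omega)
    by_cases h3 : j.val + 1 < n
    · rw [if_neg h1, if_neg (by omega), dif_pos h3, dif_pos h3]
      simp only [hurwitzSigma]
      rw [if_neg (by omega), if_neg (by omega)]
    · rw [if_neg h1, if_neg (by omega), dif_neg h3, dif_neg h3]
      have hCu : (List.ofFn fun i : Fin d =>
            hurwitzSigma p hp1 t ⟨p + 1 + 1 + i.val, by omega⟩) =
          (List.ofFn fun i : Fin d => t ⟨p + 2 + i.val, by omega⟩) := by
        congr 1
        funext i
        simp only [hurwitzSigma]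
        rw [if_neg (by omega), if_neg (by omega)]
      have hmid : hurwitzSigma p hp1 t ⟨p + 1, by omega⟩ =
          (t ⟨p + 1, hp1⟩)⁻¹ * t ⟨p, by omega⟩ * t ⟨p + 1, hp1⟩ := by
        show (if p + 1 = p then _ else if p + 1 = p + 1 then _ else _) = _
        rw [if_neg (by omega), if_pos rfl]
      have hC : (List.ofFn fun i : Fin (d + 1) => t ⟨p + 1 + i.val, by omega⟩).prod =
          t ⟨p + 1, hp1⟩ * (List.ofFn fun i : Fin d => t ⟨p + 2 + i.val, by omega⟩).prod := by
        rw [List.ofFn_succ, List.prod_cons]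
        refine congrArg₂ (· * ·) ?_ ?_
        · exact tcongr t (by simp)
        · refine congrArg List.prod (congrArg List.ofFn ?_)
          funext i
          exact tcongr t (by simp [Fin.val_succ]; omega)
      rw [hCu, hmid, hC]
      group

/-- The cycle map: shift left, wrap-around entry conjugated by the total product. -/
def cycFun {n : ℕ} (t : Fin n → G) : Fin n → G := fun j =>
  if h : j.val + 1 < n then t ⟨j.val + 1, h⟩
  else (List.ofFn t).prod⁻¹ * t ⟨0, Nat.lt_of_le_of_lt (Nat.zero_le _) j.isLt⟩ *
    (List.ofFn t).prod

lemma cyc_mem {n : ℕ} (t : Fin n → G) : cycFun t ∈ hurwitzOrbit t := by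
  cases n with
  | zero =>
    have he : cycFun t = t := funext fun j => j.elim0
    rw [he]; exact self_mem t
  | succ m =>
    have h := sweep m t 0 (by omega)
    have he : cycFun t = (fun j : Fin (m + 1) => if j.val < 0 then t j
        else if hh : j.val + 1 < m + 1 then t ⟨j.val + 1, hh⟩
        else (List.ofFn fun i : Fin m => t ⟨0 + 1 + i.val, by omega⟩).prod⁻¹ *
            t ⟨0, by omega⟩ *
            (List.ofFn fun i : Fin m => t ⟨0 + 1 + i.val, by omega⟩).prod) := by
      funext j
      rw [if_neg (Nat.not_lt_zero _)]
      by_cases hj : j.val + 1 < m + 1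
      · simp only [cycFun]; rw [dif_pos hj, dif_pos hj]
      · simp only [cycFun]; rw [dif_neg hj, dif_neg hj]
        have hc : (List.ofFn t).prod =
            t ⟨0, by omega⟩ * (List.ofFn fun i : Fin m => t ⟨0 + 1 + i.val, by omega⟩).prod := by
          rw [List.ofFn_succ, List.prod_cons]
          refine congrArg₂ (· * ·) rfl ?_
          refine congrArg List.prod (congrArg List.ofFn ?_)
          funext i
          exact tcongr t (by simp [Fin.val_succ]; omega)
        rw [hc]
        group
    rw [he]; exact h

lemma cyc_prod {n : ℕ} (t : Fin n → G) :
    (List.ofFn (cycFun t)).prod = (List.ofFn t).prod := by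
  cases n with
  | zero => simp
  | succ m =>
    have h1 : ∀ i : Fin m, cycFun t i.castSucc = t i.succ := by
      intro i
      simp only [cycFun]
      rw [dif_pos (by simp [Fin.coe_castSucc])]
      exact tcongr t (by simp [Fin.coe_castSucc, Fin.val_succ])
    have h2 : cycFun t (Fin.last m) =
        (List.ofFn t).prod⁻¹ * t 0 * (List.ofFn t).prod := by
      simp only [cycFun]
      rw [dif_neg (by simp [Fin.val_last])]
      refine congrArg₂ (· * ·) (congrArg₂ (· * ·) rfl ?_) rfl
      exact congrArg t (Fin.ext (by simp))
    have hc : (List.ofFn t).prod = t 0 * (List.ofFn fun i => t i.succ).prod := by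
      rw [List.ofFn_succ, List.prod_cons]
    rw [List.ofFn_succ' (cycFun t), List.prod_concat, h2]
    have h3 : (List.ofFn fun i : Fin m => cycFun t i.castSucc) =
        (List.ofFn fun i : Fin m => t i.succ) := by
      refine congrArg List.ofFn (funext fun i => h1 i)
    rw [h3]
    conv_lhs => rw [hc]
    conv_rhs => rw [hc]
    group

lemma cyc_iter_prod {n : ℕ} (t : Fin n → G) (j : ℕ) :
    (List.ofFn (cycFun^[j] t)).prod = (List.ofFn t).prod := by
  induction j with
  | zero => rfl
  | succ j ih => rw [Function.iterate_succ_apply', cyc_prod, ih]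

lemma cyc_iter_apply {n : ℕ} (t : Fin n → G) :
    ∀ j, j ≤ n → ∀ i : Fin n,
    cycFun^[j] t i = if h : i.val + j < n then t ⟨i.val + j, h⟩
      else (List.ofFn t).prod⁻¹ * t ⟨(i.val + j) % n, Nat.mod_lt _ i.pos⟩ *
        (List.ofFn t).prod := by
  intro j
  induction j with
  | zero =>
    intro _ i
    rw [dif_pos (by omega)]
    simp
  | succ j ih =>
    intro hj i
    rw [Function.iterate_succ_apply']
    by_cases hi : i.val + 1 < n
    · have h1 : cycFun (cycFun^[j] t) i = (cycFun^[j] t) ⟨i.val + 1, hi⟩ := by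
        simp only [cycFun]; rw [dif_pos hi]
      rw [h1, ih (by omega) ⟨i.val + 1, hi⟩]
      by_cases h2 : i.val + 1 + j < n
      · rw [dif_pos (show (⟨i.val + 1, hi⟩ : Fin n).val + j < n from h2),
          dif_pos (by omega)]
        exact tcongr t (by fin_omega)
      · rw [dif_neg (show ¬((⟨i.val + 1, hi⟩ : Fin n).val + j < n) from h2),
          dif_neg (by omega)]
        exact congrArg₂ (· * ·) (congrArg₂ (· * ·) rfl
          (tcongr t (congrArg (fun x => x % n) (by fin_omega)))) rfl
    · have hn : 0 < n := Nat.lt_of_le_of_lt (Nat.zero_le _) i.isLt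
      have h1 : cycFun (cycFun^[j] t) i =
          (List.ofFn (cycFun^[j] t)).prod⁻¹ * (cycFun^[j] t) ⟨0, hn⟩ *
            (List.ofFn (cycFun^[j] t)).prod := by
        simp only [cycFun]; rw [dif_neg hi]
      rw [h1, cyc_iter_prod, ih (by omega) ⟨0, hn⟩]
      rw [dif_pos (show ((⟨0, hn⟩ : Fin n)).val + j < n by fin_omega), dif_neg (by omega)]
      refine congrArg₂ (· * ·) (congrArg₂ (· * ·) rfl (tcongr t ?_)) rfl
      rw [show i.val + (j + 1) = n + j by omega, Nat.add_mod_left,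
        Nat.mod_eq_of_lt (by omega)]
      simp

lemma twist_mem {n : ℕ} (t : Fin n → G) :
    (fun i : Fin n => (List.ofFn t).prod⁻¹ * t i * (List.ofFn t).prod) ∈ hurwitzOrbit t := by
  have hiter : ∀ j, cycFun^[j] t ∈ hurwitzOrbit t := by
    intro j
    induction j with
    | zero => exact self_mem t
    | succ j ih => rw [Function.iterate_succ_apply']; exact orbit_trans ih (cyc_mem _)
  have he : (fun i : Fin n => (List.ofFn t).prod⁻¹ * t i * (List.ofFn t).prod) =
      cycFun^[n] t := by
    funext i
    rw [cyc_iter_apply t n le_rfl i, dif_neg (by omega)]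
    exact congrArg₂ (· * ·) (congrArg₂ (· * ·) rfl
      (congrArg t (Fin.ext (by simp [Nat.mod_eq_of_lt i.isLt])))) rfl
  rw [he]; exact hiter n

lemma sigma_snoc {m : ℕ} (i : ℕ) (hi : i + 1 < m) (w : Fin m → G) (x : G) :
    hurwitzSigma i (by omega : i + 1 < m + 1) (Fin.snoc w x) =
      Fin.snoc (hurwitzSigma i hi w) x := by
  funext j
  refine Fin.lastCases ?_ ?_ j
  · simp only [hurwitzSigma, Fin.snoc_last, Fin.val_last]
    rw [if_neg (by omega), if_neg (by omega)]
  · intro j'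
    have e1 : (⟨i + 1, by omega⟩ : Fin (m + 1)) = Fin.castSucc ⟨i + 1, hi⟩ := Fin.ext rfl
    have e2 : (⟨i, by omega⟩ : Fin (m + 1)) = Fin.castSucc ⟨i, by omega⟩ := Fin.ext rfl
    simp only [hurwitzSigma, Fin.snoc_castSucc, Fin.coe_castSucc, e1, e2]

lemma rel_snoc {m : ℕ} {a b : Fin m → G} (x : G) (h : hurwitzRel a b) :
    hurwitzRel (Fin.snoc a x : Fin (m + 1) → G) (Fin.snoc b x) := by
  obtain ⟨i, hi, hc⟩ := h
  refine ⟨i, by omega, ?_⟩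
  rcases hc with hc | hc
  · left; rw [sigma_snoc i hi, hc]
  · right; rw [sigma_snoc i hi, hc]

lemma orbit_snoc {m : ℕ} {v u : Fin m → G} (x : G) (h : u ∈ hurwitzOrbit v) :
    (Fin.snoc u x : Fin (m + 1) → G) ∈ hurwitzOrbit (Fin.snoc v x) :=
  Relation.ReflTransGen.lift (r := hurwitzRel) (p := hurwitzRel)
    (fun w => (Fin.snoc w x : Fin (m + 1) → G)) (fun _ _ hr => rel_snoc x hr) _ _ h

lemma orbit_delete {m : ℕ} (s : Fin (m + 1) → G) (hfin : (hurwitzOrbit s).Finite)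
    (p : Fin (m + 1)) : (hurwitzOrbit (s ∘ p.succAbove)).Finite := by
  have hsw := sweep (m - p.val) s p.val (by have := p.isLt; omega)
  obtain ⟨r, hr_mem, hr_init⟩ : ∃ r : Fin (m + 1) → G,
      r ∈ hurwitzOrbit s ∧ Fin.init r = s ∘ p.succAbove := by
    refine ⟨_, hsw, ?_⟩
    funext j
    simp only [Fin.init, Function.comp_apply]
    by_cases hj : (j.val : ℕ) < p.val
    · rw [if_pos (show (Fin.castSucc j).val < p.val from hj),
        Fin.succAbove_of_castSucc_lt p j (by rwa [Fin.lt_def])]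
    · rw [if_neg (show ¬ (Fin.castSucc j).val < p.val from hj),
        dif_pos (show (Fin.castSucc j).val + 1 < m + 1 by
          have := j.isLt; simp only [Fin.coe_castSucc]; omega)]
      rw [Fin.succAbove, if_neg (by rw [Fin.lt_def]; exact hj)]
      exact congrArg s (Fin.ext (by simp))
  have hinj : Function.Injective
      (fun u : Fin m → G => (Fin.snoc u (r (Fin.last m)) : Fin (m + 1) → G)) := by
    intro a b hab
    have h2 := congrArg Fin.init hab
    rwa [Fin.init_snoc, Fin.init_snoc] at h2
  rw [← hr_init]
  refine Set.Finite.of_finite_image (hfin.subset ?_) hinj.injOn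
  rintro _ ⟨u, hu, rfl⟩
  have h2 := orbit_snoc (r (Fin.last m)) hu
  rw [Fin.snoc_init_self] at h2
  exact orbit_trans hr_mem h2

lemma orbit_comp_finite : ∀ n : ℕ, ∀ s : Fin n → G, (hurwitzOrbit s).Finite →
    ∀ {k : ℕ} (ι : Fin k → Fin n), StrictMono ι → (hurwitzOrbit (s ∘ ι)).Finite := by
  intro n
  induction n with
  | zero =>
    intro s _ k ι _
    cases k with
    | zero => exact Set.toFinite _
    | succ k' => exact (ι 0).elim0
  | succ m ih =>
    intro s hf k ι hι
    by_cases hsurj : ∀ p : Fin (m + 1), p ∈ Set.range ι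
    · have hks : Function.Surjective ι := fun p => hsurj p
      have hcard : k = m + 1 := by
        have h1 := Fintype.card_le_of_surjective ι hks
        have h2 := Fintype.card_le_of_injective ι hι.injective
        simpa using le_antisymm h2 h1
      subst hcard
      have hrange : Set.range ι = Set.range (id : Fin (m + 1) → Fin (m + 1)) := by
        rw [Set.range_id]
        exact Set.eq_univ_of_forall hsurj
      haveI : WellFoundedLT (Fin (m + 1)) := inferInstance
      have hid : ι = id :=
        (StrictMono.range_inj (β := Fin (m + 1)) (γ := Fin (m + 1))
          hι strictMono_id).mp hrange
      rw [hid, Function.comp_id]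
      exact hf
    · push_neg at hsurj
      obtain ⟨p, hp⟩ := hsurj
      have hfac : ∀ j : Fin k, ∃ j' : Fin m, p.succAbove j' = ι j := fun j =>
        Fin.exists_succAbove_eq (fun he => hp ⟨j, he⟩)
      choose ι' hι' using hfac
      have hmono : StrictMono ι' := by
        intro a b hab
        have h3 := hι hab
        rw [← hι' a, ← hι' b] at h3
        exact Fin.succAbove_lt_succAbove_iff.mp h3
      have hcomp : s ∘ ι = (s ∘ p.succAbove) ∘ ι' := by
        funext j
        simp [← hι' j]
      rw [hcomp]
      exact ih (s ∘ p.succAbove) (orbit_delete s hf p) ι' hmono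

lemma prod_conj : ∀ {k : ℕ} (t : Fin k → G) (g : G),
    (List.ofFn fun i => g⁻¹ * t i * g).prod = g⁻¹ * (List.ofFn t).prod * g := by
  intro k
  induction k with
  | zero => intro t g; simp
  | succ m ih =>
    intro t g
    rw [List.ofFn_succ, List.prod_cons, List.ofFn_succ (f := t), List.prod_cons]
    rw [show (List.ofFn fun i : Fin m => (fun i : Fin (m+1) => g⁻¹ * t i * g) i.succ)
        = List.ofFn fun i : Fin m => g⁻¹ * (fun i : Fin m => t i.succ) i * g from rfl]
    rw [ih (fun i => t i.succ) g]
    group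

end HWaux

/-- If the Hurwitz orbit of `(s_1,…,s_n)` is finite then for every subsequence
`(i_1,…,i_k)` some positive power of `s_{i_1} ⋯ s_{i_k}` commutes with each of
`s_{i_1},…,s_{i_k}`. -/
theorem hurwitz_finite_orbit_subseq_central_power {G : Type*} [Group G] {n : ℕ}
    (s : Fin n → G) (hfin : (hurwitzOrbit s).Finite)
    {k : ℕ} (ι : Fin k → Fin n) (hι : StrictMono ι) :
    ∃ m : ℕ, 0 < m ∧ ∀ j : Fin k,
      Commute ((List.ofFn fun j => s (ι j)).prod ^ m) (s (ι j)) := by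
  classical
  set t : Fin k → G := fun j => s (ι j) with ht
  have hfin' : (hurwitzOrbit t).Finite := HWaux.orbit_comp_finite n s hfin ι hι
  set c : G := (List.ofFn t).prod with hc
  have hu : ∀ a : ℕ, (fun i => (c ^ a)⁻¹ * t i * c ^ a) ∈ hurwitzOrbit t := by
    intro a
    induction a with
    | zero =>
      have he : (fun i => (c ^ 0)⁻¹ * t i * c ^ 0) = t := by funext i; simp
      rw [he]; exact HWaux.self_mem t
    | succ a ih =>
      have hprod : (List.ofFn fun i => (c ^ a)⁻¹ * t i * c ^ a).prod = c := by
        rw [HWaux.prod_conj, ← hc]; group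
      have h2 := HWaux.twist_mem (fun i => (c ^ a)⁻¹ * t i * c ^ a)
      rw [hprod] at h2
      have he : (fun i => (c ^ (a + 1))⁻¹ * t i * c ^ (a + 1)) =
          (fun i => c⁻¹ * ((c ^ a)⁻¹ * t i * c ^ a) * c) := by
        funext i; rw [pow_succ]; group
      rw [he]
      exact HWaux.orbit_trans ih h2
  obtain ⟨a, -, b, -, hab, he⟩ := Set.infinite_univ.exists_ne_map_eq_of_mapsTo
    (f := fun a : ℕ => (fun i => (c ^ a)⁻¹ * t i * c ^ a)) (fun a _ => hu a) hfin'
  have key : ∀ a b : ℕ, a < b →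
      ((fun i => (c ^ a)⁻¹ * t i * c ^ a) = fun i => (c ^ b)⁻¹ * t i * c ^ b) →
      ∃ m, 0 < m ∧ ∀ j, Commute (c ^ m) (t j) := by
    intro a b hlt heq
    refine ⟨b - a, by omega, fun j => ?_⟩
    have h := congrFun heq j
    have hb1 : c ^ (b - a) * c ^ a = c ^ b := by rw [← pow_add]; congr 1; omega
    have e1 : c ^ (b - a) * t j * c ^ a = t j * c ^ (b - a) * c ^ a := by
      calc c ^ (b - a) * t j * c ^ a
          = (c ^ (b - a) * c ^ a) * ((c ^ a)⁻¹ * t j * c ^ a) := by group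
        _ = c ^ b * ((c ^ b)⁻¹ * t j * c ^ b) := by rw [hb1, h]
        _ = t j * c ^ b := by group
        _ = t j * (c ^ (b - a) * c ^ a) := by rw [hb1]
        _ = t j * c ^ (b - a) * c ^ a := by rw [mul_assoc]
    exact mul_right_cancel e1
  rcases lt_or_gt_of_ne hab with hlt | hlt
  · obtain ⟨m, hm, hcj⟩ := key a b hlt he
    exact ⟨m, hm, fun j => hcj j⟩
  · obtain ⟨m, hm, hcj⟩ := key b a hlt he.symm
    exact ⟨m, hm, fun j => hcj j⟩
end

section
/- Let (s_1,…,s_n) be complex reflections in GL(V) with dim V = n, with roots r_i and coroots ř_i, and let C = (ř_i(r_j))_{i,j} be the Cartan matrix. If C is invertible, then the roots r_1,…,r_n form a basis of V, and in this basis the matrix of s_i equals the identity matrix with the i-th row of C subtracted from its i-th row; in particular C determines the tuple (s_1,…,s_n) up to simultaneous conjugation in GL(V). -/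
set_option synthInstance.maxHeartbeats 1000000
set_option maxHeartbeats 1000000

private lemma li_of_cartan (K : Subfield ℂ) (V : Type*) [AddCommGroup V]
    [Module K V] {n : ℕ} (r : Fin n → V) (rv : Fin n → V →ₗ[K] K)
    (hC : IsUnit (Matrix.of fun i j => rv i (r j)).det) :
    LinearIndependent K r := by
  rw [Fintype.linearIndependent_iff]
  intro c hc
  set M : Matrix (Fin n) (Fin n) K := Matrix.of fun i j => rv i (r j)
  have hM : IsUnit M := (Matrix.isUnit_iff_isUnit_det M).mpr hC
  have hmv : M.mulVec c = 0 := by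
    funext i
    have := congrArg (rv i) hc
    simpa [Matrix.mulVec, dotProduct, M, map_sum, mul_comm] using this
  have : c = 0 := by
    have h := congrArg (fun v => M⁻¹.mulVec v) hmv
    simpa [Matrix.mulVec_mulVec, Matrix.nonsing_inv_mul M hC] using h
  intro i; rw [this]; rfl

/-- If the Cartan matrix `C = (ř_i(r_j))` of a tuple of `n = dim V` complex
reflections is invertible, then the roots form a basis of `V`, in this basis the
matrix of `s_i` is the identity with the `i`-th row of `C` subtracted from its
`i`-th row (equivalently `s_i(r_j) = r_j - C_{ij} • r_i`), and `C` determines the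
tuple up to simultaneous conjugation in `GL(V)`. -/
theorem cartan_matrix_determines_tuple (K : Subfield ℂ) (V : Type*) [AddCommGroup V]
    [Module K V] [FiniteDimensional K V] {n : ℕ} (hdim : Module.finrank K V = n)
    (s : Fin n → V ≃ₗ[K] V) (r : Fin n → V) (rv : Fin n → V →ₗ[K] K)
    (hord : ∀ i, IsOfFinOrder (s i)) (hr0 : ∀ i, r i ≠ 0)
    (hs : ∀ i x, s i x = x - rv i x • r i)
    (hC : IsUnit (Matrix.of fun i j => rv i (r j)).det) :
    (LinearIndependent K r ∧ Submodule.span K (Set.range r) = ⊤) ∧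
    (∀ i j, s i (r j) = r j - rv i (r j) • r i) ∧
    (∀ (s' : Fin n → V ≃ₗ[K] V) (r' : Fin n → V) (rv' : Fin n → V →ₗ[K] K),
      (∀ i x, s' i x = x - rv' i x • r' i) →
      (∀ i j, rv' i (r' j) = rv i (r j)) →
      ∃ g : V ≃ₗ[K] V, ∀ i x, s' i (g x) = g (s i x)) := by
  have hli : LinearIndependent K r := li_of_cartan K V r rv hC
  have hcard : Fintype.card (Fin n) = Module.finrank K V := by simp [hdim]
  have hspan : Submodule.span K (Set.range r) = ⊤ :=
    hli.span_eq_top_of_card_eq_finrank' hcard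
  let b : Module.Basis (Fin n) K V := Module.Basis.mk hli hspan.ge
  have hb : ∀ j, b j = r j := fun j => by simp [b]
  refine ⟨⟨hli, hspan⟩, fun i j => hs i (r j), ?_⟩
  intro s' r' rv' hs' hC'
  have hli' : LinearIndependent K r' := by
    apply li_of_cartan K V r' rv'
    have : (Matrix.of fun i j => rv' i (r' j)) = (Matrix.of fun i j => rv i (r j)) :=
      congrArg Matrix.of (funext fun i => funext fun j => hC' i j)
    rw [this]; exact hC
  have hspan' : Submodule.span K (Set.range r') = ⊤ :=
    hli'.span_eq_top_of_card_eq_finrank' hcard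
  let b' : Module.Basis (Fin n) K V := Module.Basis.mk hli' hspan'.ge
  have hb' : ∀ j, b' j = r' j := fun j => by simp [b']
  set g := b.equiv b' (Equiv.refl _) with hg
  refine ⟨g, fun i x => ?_⟩
  have key : ((s' i).toLinearMap ∘ₗ (g : V →ₗ[K] V)) =
      ((g : V →ₗ[K] V) ∘ₗ (s i).toLinearMap) := by
    apply b.ext
    intro j
    have hgj : g (b j) = r' j := by
      rw [hg, Module.Basis.equiv_apply, Equiv.refl_apply, hb']
    simp only [LinearMap.comp_apply, LinearEquiv.coe_coe, LinearMap.coe_coe]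
    rw [hgj, hs' i, hb j, hs i, hC' i j, map_sub, map_smul]
    congr 1
    · exact (hgj.symm.trans (by rw [hb])) ▸ rfl
    · congr 1
      have : g (r i) = r' i := by rw [← hb i]; exact (by rw [hg, Module.Basis.equiv_apply, Equiv.refl_apply, hb'])
      rw [this]
  exact congrFun (congrArg (fun (L : V →ₗ[K] V) => (L : V → V)) key) x
end

section
/- Coleman's lemma: Let (s_1,…,s_n) be complex reflections whose roots r_i form a basis of V, with Cartan matrix C. Write C = U + L where U is upper triangular unipotent and L is lower triangular with diagonal entries −ζ_i (ζ_i the nontrivial eigenvalue of s_i). Then the matrix of the Coxeter element c = s_1 s_2 ⋯ s_n in the basis (r_i) equals −U⁻¹L. -/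
set_option synthInstance.maxHeartbeats 1000000
set_option maxHeartbeats 1000000

/-- Coleman's lemma: writing the Cartan matrix as `C = U + L` with `U` upper
triangular unipotent and `L` lower triangular with diagonal `-ζ_i`, the matrix of
the Coxeter element `c = s_1 ⋯ s_n` in the basis of roots equals `-U⁻¹ L`. -/
theorem coleman_coxeter_matrix (K : Subfield ℂ) (V : Type*) [AddCommGroup V]
    [Module K V] [FiniteDimensional K V] {n : ℕ}
    (b : Module.Basis (Fin n) K V) (s : Fin n → V ≃ₗ[K] V)
    (rv : Fin n → V →ₗ[K] K) (ζ : Fin n → K)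
    (hord : ∀ i, IsOfFinOrder (s i))
    (hs : ∀ i x, s i x = x - rv i x • b i)
    (hζ : ∀ i, rv i (b i) = 1 - ζ i)
    (U L : Matrix (Fin n) (Fin n) K)
    (hU1 : ∀ i, U i i = 1) (hU0 : ∀ i j : Fin n, j < i → U i j = 0)
    (hL1 : ∀ i, L i i = -ζ i) (hL0 : ∀ i j : Fin n, i < j → L i j = 0)
    (hUL : U + L = Matrix.of fun i j => rv i (b j)) :
    LinearMap.toMatrix b b (List.ofFn fun i => (s i).toLinearMap).prod = -(U⁻¹ * L) := by
  classical
  set M : Fin n → Matrix (Fin n) (Fin n) K :=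
    fun k => LinearMap.toMatrix b b (s k).toLinearMap with hM
  -- entries of the reflection matrices
  have hMk : ∀ k p j, M k p j
      = (if j = p then (1:K) else 0) - rv k (b j) * (if k = p then 1 else 0) := by
    intro k p j
    simp [hM, LinearMap.toMatrix_apply, hs, Finsupp.single_apply]
  -- the Cartan row
  set c : Fin n → Fin n → K := fun k j => rv k (b j) with hc
  have hcrow : ∀ i j, c i j = U i j + L i j := by
    intro i j
    have := congrFun (congrFun hUL.symm i) j
    simpa [hc] using this
  -- the step function
  set step : (Fin n → K) → Fin n → (Fin n → K) := fun w k => w - w k • c k with hstep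
  -- vecMul against a reflection matrix
  have hvec : ∀ (v : Fin n → K) (k : Fin n), Matrix.vecMul v (M k) = step v k := by
    intro v k
    funext j
    have h1 : ∀ p, v p * M k p j
        = v p * (if j = p then (1:K) else 0)
          - rv k (b j) * (v p * (if k = p then 1 else 0)) := by
      intro p; rw [hMk]; ring
    simp only [Matrix.vecMul, dotProduct, h1, Finset.sum_sub_distrib,
      ← Finset.mul_sum, mul_ite, mul_one, mul_zero, Finset.sum_ite_eq,
      Finset.mem_univ, if_true]
    simp [hstep, hc, mul_comm]
  -- vecMul against a product of reflection matrices is a fold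
  have hprod : ∀ (l : List (Fin n)) (v : Fin n → K),
      Matrix.vecMul v (l.map M).prod = l.foldl step v := by
    intro l
    induction l with
    | nil => intro v; simp
    | cons k t ih =>
      intro v
      simp only [List.map_cons, List.prod_cons, List.foldl_cons]
      rw [← Matrix.vecMul_vecMul, hvec, ih]
  -- a vector vanishing on all indices of a list is fixed by the fold
  have hfix : ∀ (l : List (Fin n)) (v : Fin n → K), (∀ k ∈ l, v k = 0) →
      l.foldl step v = v := by
    intro l
    induction l with
    | nil => intro v _; simp
    | cons k t ih =>
      intro v hv
      have h0 : v k = 0 := hv k (List.mem_cons_self (a := k) (l := t))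
      have : step v k = v := by simp [hstep, h0]
      rw [List.foldl_cons, this]
      exact ih v fun x hx => hv x (List.mem_cons_of_mem _ hx)
  -- the key row computation
  have hrow : ∀ i : Fin n, (List.finRange n).foldl step (U i) = fun j => -(L i j) := by
    intro i
    have hsplit : List.finRange n
        = (List.finRange n).take i.val ++ (List.finRange n).drop i.val :=
      (List.take_append_drop _ _).symm
    rw [hsplit, List.foldl_append]
    have htake : List.foldl step (U i) ((List.finRange n).take i.val) = U i := by
      apply hfix
      intro k hk
      obtain ⟨j, hj, hjk⟩ := List.mem_iff_getElem.mp hk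
      have hkv : k.val = j := by
        rw [← hjk]; simp [List.getElem_take, List.getElem_finRange]
      have hji : j < i.val := by
        simp [List.length_take] at hj; omega
      exact hU0 i k (Fin.lt_def.mpr (by omega))
    rw [htake]
    have hdrop : (List.finRange n).drop i.val
        = i :: (List.finRange n).drop (i.val + 1) := by
      rw [List.drop_eq_getElem_cons (by simp [i.isLt])]
      congr 1
      simp [List.getElem_finRange]
    rw [hdrop, List.foldl_cons]
    have hstep1 : step (U i) i = fun j => -(L i j) := by
      funext j
      simp [hstep, hU1 i, hcrow i j]
    rw [hstep1]
    apply hfix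
    intro k hk
    obtain ⟨j, hj, hjk⟩ := List.mem_iff_getElem.mp hk
    have hkv : k.val = i.val + 1 + j := by
      rw [← hjk]; simp [List.getElem_drop, List.getElem_finRange]
    have hik : i < k := Fin.lt_def.mpr (by omega)
    simp [hL0 i k hik]
  -- toMatrix of a product of linear maps
  have htm : ∀ l : List (V →ₗ[K] V),
      LinearMap.toMatrix b b l.prod = (l.map (LinearMap.toMatrix b b)).prod := by
    intro l
    induction l with
    | nil => simp [LinearMap.toMatrix_one]
    | cons f t ih => simp [LinearMap.toMatrix_mul, ih]
  set P : Matrix (Fin n) (Fin n) K := ((List.finRange n).map M).prod with hP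
  have hmain : LinearMap.toMatrix b b
      (List.ofFn fun i => (s i).toLinearMap).prod = P := by
    rw [htm, List.map_ofFn, hP, List.ofFn_eq_map]
    rfl
  -- U * P = -L
  have hUP : U * P = -L := by
    ext i j
    have : (U * P) i j = Matrix.vecMul (U i) P j := by
      simp [Matrix.mul_apply, Matrix.vecMul, dotProduct]
    rw [this, hP, hprod, hrow i]
    simp
  -- U is invertible
  have hdet : U.det = 1 := by
    have hbt : U.BlockTriangular id := fun i j h => hU0 i j h
    rw [Matrix.det_of_upperTriangular hbt]
    simp [hU1]
  have hunit : IsUnit U.det := by rw [hdet]; exact isUnit_one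
  rw [hmain]
  calc P = (U⁻¹ * U) * P := by rw [Matrix.nonsing_inv_mul U hunit, one_mul]
    _ = U⁻¹ * (U * P) := by rw [Matrix.mul_assoc]
    _ = U⁻¹ * (-L) := by rw [hUP]
    _ = -(U⁻¹ * L) := by rw [Matrix.mul_neg]
end

section
/- With notation as in Coleman's lemma (c = s_1⋯s_n with matrix −U⁻¹L, C = U + L, U upper unipotent), the characteristic polynomial of c satisfies χ_c(x) = det(xU + L); in particular det(C) = χ_c(1). -/
set_option synthInstance.maxHeartbeats 1000000
set_option maxHeartbeats 1000000

open Polynomial in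
/-- With `C = U + L` as in Coleman's lemma, the characteristic polynomial of the
Coxeter element `c = s_1 ⋯ s_n` is `χ_c(x) = det(xU + L)`; in particular
`det C = χ_c(1)`. -/
theorem coleman_charpoly (K : Subfield ℂ) (V : Type*) [AddCommGroup V]
    [Module K V] [FiniteDimensional K V] {n : ℕ}
    (b : Module.Basis (Fin n) K V) (s : Fin n → V ≃ₗ[K] V)
    (rv : Fin n → V →ₗ[K] K) (ζ : Fin n → K)
    (hord : ∀ i, IsOfFinOrder (s i))
    (hs : ∀ i x, s i x = x - rv i x • b i)
    (hζ : ∀ i, rv i (b i) = 1 - ζ i)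
    (U L : Matrix (Fin n) (Fin n) K)
    (hU1 : ∀ i, U i i = 1) (hU0 : ∀ i j : Fin n, j < i → U i j = 0)
    (hL1 : ∀ i, L i i = -ζ i) (hL0 : ∀ i j : Fin n, i < j → L i j = 0)
    (hUL : U + L = Matrix.of fun i j => rv i (b j)) :
    (LinearMap.toMatrix b b (List.ofFn fun i => (s i).toLinearMap).prod).charpoly =
      (Matrix.of fun i j => Polynomial.X * Polynomial.C (U i j) + Polynomial.C (L i j)).det ∧
    (Matrix.of fun i j => rv i (b j)).det =
      (LinearMap.toMatrix b b (List.ofFn fun i => (s i).toLinearMap).prod).charpoly.eval 1 := by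
  classical
  set f : Fin n → V →ₗ[K] V := fun i => (s i).toLinearMap with hf
  set l : List (V →ₗ[K] V) := List.ofFn f with hl
  set M : Matrix (Fin n) (Fin n) K := LinearMap.toMatrix b b l.prod with hM
  have hlen : l.length = n := by simp [hl]
  -- Key algebraic fact: U * M = -L
  have key : ∀ j k, (U * M) k j = -L k j := by
    intro j
    set y : ℕ → V := fun m => (l.drop m).prod (b j) with hy
    have hyn : y n = b j := by
      simp [hy, List.drop_eq_nil_of_le hlen.le]
    have hstep : ∀ m : Fin n, y m = y (m + 1) - rv m (y (m + 1)) • b m := by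
      intro m
      have hm : (m : ℕ) < l.length := by simp [hlen]
      have hdrop : l.drop m = f m :: l.drop (m + 1) := by
        rw [List.drop_eq_getElem_cons hm]
        congr 1
        simp [hl]
      have : y m = f m (y (m + 1)) := by
        simp only [hy, hdrop, List.prod_cons, Module.End.mul_apply]
      rw [this, hf]
      exact hs m _
    set t : Fin n → K := fun i => rv i (y (i + 1)) with ht
    have hA : ∀ d m, m + d = n →
        y m = b j - ∑ i ∈ Finset.univ.filter (fun i : Fin n => m ≤ (i : ℕ)), t i • b i := by
      intro d
      induction d with
      | zero =>
        intro m hm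
        have hm' : m = n := by omega
        have hfilter : Finset.univ.filter (fun i : Fin n => m ≤ (i : ℕ)) = ∅ := by
          apply Finset.filter_false_of_mem
          intro i _
          omega
        rw [hfilter, hm', hyn]
        simp
      | succ d ih =>
        intro m hm
        have hmn : m < n := by omega
        have h1 : y m = y (m + 1) - t ⟨m, hmn⟩ • b ⟨m, hmn⟩ := hstep ⟨m, hmn⟩
        have h2 := ih (m + 1) (by omega)
        have hsplit : Finset.univ.filter (fun i : Fin n => m ≤ (i : ℕ)) =
            insert ⟨m, hmn⟩ (Finset.univ.filter fun i : Fin n => m + 1 ≤ (i : ℕ)) := by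
          ext i
          simp only [Finset.mem_filter, Finset.mem_insert, Finset.mem_univ, true_and]
          constructor
          · intro h
            rcases eq_or_lt_of_le h with h' | h'
            · left; exact Fin.ext h'.symm
            · right; omega
          · rintro (rfl | h)
            · exact le_refl m
            · omega
        rw [h1, h2, hsplit, Finset.sum_insert (by simp)]
        abel
    have hy0 : y 0 = b j - ∑ i, t i • b i := by
      have h := hA n 0 (by omega)
      have : Finset.univ.filter (fun i : Fin n => 0 ≤ (i : ℕ)) = Finset.univ := by
        apply Finset.filter_true_of_mem; intro i _; omega
      rw [this] at h
      exact h
    have hMent : ∀ k, M k j = (if j = k then 1 else 0) - t k := by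
      intro k
      have hcy : l.prod (b j) = y 0 := by simp [hy]
      rw [hM, LinearMap.toMatrix_apply, hcy, hy0]
      rw [map_sub, map_sum]
      simp only [map_smul, b.repr_self]
      rw [Finsupp.coe_sub, Pi.sub_apply, Finsupp.single_apply]
      congr 1
      rw [Finset.sum_apply']
      simp only [Finsupp.smul_apply, Finsupp.single_apply, smul_eq_mul, mul_ite, mul_one, mul_zero]
      simp
    -- the recursion for t
    have htk : ∀ k : Fin n, t k = rv k (b j) -
        ∑ m ∈ Finset.univ.filter (fun m : Fin n => (k : ℕ) < (m : ℕ)), t m * rv k (b m) := by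
      intro k
      have h := hA (n - ((k : ℕ) + 1)) ((k : ℕ) + 1) (by omega)
      have hset : Finset.univ.filter (fun i : Fin n => (k : ℕ) + 1 ≤ (i : ℕ)) =
          Finset.univ.filter (fun m : Fin n => (k : ℕ) < (m : ℕ)) := by
        ext i
        simp only [Finset.mem_filter, Finset.mem_univ, true_and]
        omega
      rw [hset] at h
      have htt : t k = rv k (y ((k : ℕ) + 1)) := rfl
      rw [htt, h, map_sub, map_sum]
      simp only [map_smul, smul_eq_mul]
    have hCU : ∀ k m : Fin n, k < m → rv k (b m) = U k m := by
      intro k m hkm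
      have h := congrFun (congrFun hUL.symm k) m
      simp only [Matrix.of_apply, Matrix.add_apply] at h
      rw [h, hL0 k m hkm, add_zero]
    have hUt : ∀ k : Fin n, ∑ m, U k m * t m = rv k (b j) := by
      intro k
      have hzero : ∀ m : Fin n, m ∈ Finset.univ →
          m ∉ Finset.univ.filter (fun m : Fin n => (k : ℕ) ≤ (m : ℕ)) → U k m * t m = 0 := by
        intro m _ hm
        simp only [Finset.mem_filter, Finset.mem_univ, true_and, not_le] at hm
        rw [hU0 k m (by exact hm), zero_mul]
      rw [← Finset.sum_subset (Finset.filter_subset _ _) hzero]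
      have hsplit : Finset.univ.filter (fun m : Fin n => (k : ℕ) ≤ (m : ℕ)) =
          insert k (Finset.univ.filter fun m : Fin n => (k : ℕ) < (m : ℕ)) := by
        ext i
        simp only [Finset.mem_filter, Finset.mem_insert, Finset.mem_univ, true_and]
        constructor
        · intro h
          rcases eq_or_lt_of_le h with h' | h'
          · left; exact Fin.ext h'.symm
          · right; omega
        · rintro (rfl | h) <;> omega
      rw [hsplit, Finset.sum_insert (by simp), hU1 k, one_mul, htk k]
      have : ∑ m ∈ Finset.univ.filter (fun m : Fin n => (k : ℕ) < (m : ℕ)), U k m * t m =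
          ∑ m ∈ Finset.univ.filter (fun m : Fin n => (k : ℕ) < (m : ℕ)), t m * rv k (b m) := by
        apply Finset.sum_congr rfl
        intro m hm
        simp only [Finset.mem_filter, Finset.mem_univ, true_and] at hm
        rw [hCU k m (by exact hm), mul_comm]
      rw [this]
      ring
    intro k
    rw [Matrix.mul_apply]
    have : ∀ m : Fin n, U k m * M m j = (if j = m then U k m else 0) - U k m * t m := by
      intro m
      rw [hMent m]
      rw [mul_sub]
      congr 1
      split <;> simp
    simp only [this]
    rw [Finset.sum_sub_distrib, Finset.sum_ite_eq Finset.univ j (fun m => U k m), hUt k]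
    have h := congrFun (congrFun hUL.symm k) j
    simp only [Matrix.of_apply, Matrix.add_apply] at h
    simp only [Finset.mem_univ, if_true]
    rw [h]
    ring
  have hUM : U * M = -L := Matrix.ext fun k j => key j k
  have hdetU : U.det = 1 := by
    rw [Matrix.det_of_upperTriangular (fun i j hij => hU0 i j hij)]
    simp [hU1]
  -- factorization over polynomials
  have hent : ∀ i j, (U.map Polynomial.C * M.charmatrix) i j =
      X * Polynomial.C (U i j) + Polynomial.C (L i j) := by
    intro i j
    rw [Matrix.mul_apply]
    have expand : ∀ m, U.map Polynomial.C i m * M.charmatrix m j =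
        (if m = j then Polynomial.C (U i m) * X else 0) - Polynomial.C (U i m * M m j) := by
      intro m
      rw [Matrix.charmatrix_apply, Matrix.map_apply, mul_sub, map_mul]
      congr 1
      rw [Matrix.diagonal_apply]
      split <;> simp
    simp only [expand]
    rw [Finset.sum_sub_distrib,
      Finset.sum_ite_eq' Finset.univ j (fun m => Polynomial.C (U i m) * X),
      ← map_sum, ← Matrix.mul_apply, key j i]
    simp only [Finset.mem_univ, if_true, Matrix.neg_apply, map_neg, sub_neg_eq_add]
    ring
  have hfac : (Matrix.of fun i j => X * Polynomial.C (U i j) + Polynomial.C (L i j)) =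
      U.map Polynomial.C * M.charmatrix := Matrix.ext fun i j => (hent i j).symm
  have h1 : (LinearMap.toMatrix b b l.prod).charpoly =
      (Matrix.of fun i j => X * Polynomial.C (U i j) + Polynomial.C (L i j)).det := by
    have hdetUC : (U.map (Polynomial.C : K → Polynomial K)).det = 1 := by
      rw [← RingHom.mapMatrix_apply, ← RingHom.map_det, hdetU, map_one]
    rw [hfac, Matrix.det_mul, hdetUC, one_mul]
    rfl
  refine ⟨h1, ?_⟩
  rw [h1]
  have heval : (Matrix.of fun i j => X * Polynomial.C (U i j) + Polynomial.C (L i j)).det.eval 1 =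
      ((Matrix.of fun i j => X * Polynomial.C (U i j) + Polynomial.C (L i j)).map
        (Polynomial.evalRingHom (1 : K))).det := by
    rw [← RingHom.mapMatrix_apply, ← RingHom.map_det]
    rfl
  rw [heval]
  congr 1
  ext i j
  have h := congrFun (congrFun hUL i) j
  simp only [Matrix.of_apply, Matrix.add_apply] at h
  simp [Matrix.map_apply, ← h]
end

section
/- With notation as above, the fixed-point space of the Coxeter element c = s_1 ⋯ s_n equals the kernel of the Cartan matrix C (viewed as an endomorphism in the r_i basis), and this equals the intersection of the reflecting hyperplanes ⋂_i ker(ř_i). -/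
set_option synthInstance.maxHeartbeats 1000000
set_option maxHeartbeats 1000000

/-- The fixed-point space of the Coxeter element `c = s_1 ⋯ s_n` equals the
kernel of the Cartan matrix `C` (viewed as an endomorphism in the root basis),
which equals the intersection of the reflecting hyperplanes `⋂_i ker ř_i`. -/
theorem coxeter_fixed_space (K : Subfield ℂ) (V : Type*) [AddCommGroup V]
    [Module K V] [FiniteDimensional K V] {n : ℕ}
    (b : Module.Basis (Fin n) K V) (s : Fin n → V ≃ₗ[K] V)
    (rv : Fin n → V →ₗ[K] K) (ζ : Fin n → K)
    (hord : ∀ i, IsOfFinOrder (s i))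
    (hs : ∀ i x, s i x = x - rv i x • b i)
    (hζ : ∀ i, rv i (b i) = 1 - ζ i)
 :
    LinearMap.ker ((List.ofFn fun i => (s i).toLinearMap).prod - LinearMap.id) =
      LinearMap.ker (Matrix.toLin b b (Matrix.of fun i j => rv i (b j))) ∧
    LinearMap.ker (Matrix.toLin b b (Matrix.of fun i j => rv i (b j))) =
      ⨅ i, LinearMap.ker (rv i) := by
  classical
  set f : Fin n → V →ₗ[K] V := fun i => (s i).toLinearMap with hf
  have hsl : ∀ (i : Fin n) (x : V), f i x = x - rv i x • b i := fun i x => hs i x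
  have hCx : ∀ x : V, (Matrix.toLin b b (Matrix.of fun i j => rv i (b j))) x
      = ∑ i, rv i x • b i := by
    intro x
    rw [Matrix.toLin_apply]
    refine Finset.sum_congr rfl fun i _ => ?_
    congr 1
    have : rv i x = rv i (∑ j, b.repr x j • b j) := by rw [b.sum_repr]
    rw [this, map_sum]
    simp [Matrix.mulVec, dotProduct, mul_comm]
  have hker : ∀ x : V, (Matrix.toLin b b (Matrix.of fun i j => rv i (b j))) x = 0
      ↔ ∀ i, rv i x = 0 := by
    intro x
    rw [hCx]
    constructor
    · intro h i
      exact Fintype.linearIndependent_iff.mp b.linearIndependent (fun i => rv i x) h i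
    · intro h; simp [h]
  have h2 : LinearMap.ker (Matrix.toLin b b (Matrix.of fun i j => rv i (b j))) =
      ⨅ i, LinearMap.ker (rv i) := by
    ext x
    simp only [LinearMap.mem_ker, Submodule.mem_iInf, hker]
  have h1 : LinearMap.ker ((List.ofFn f).prod - LinearMap.id) =
      ⨅ i, LinearMap.ker (rv i) := by
    ext x
    simp only [LinearMap.mem_ker, Submodule.mem_iInf, LinearMap.sub_apply,
      LinearMap.id_apply, sub_eq_zero]
    constructor
    · intro hx
      set y : ℕ → V := fun k => ((List.ofFn f).drop k).prod x with hy
      set c' : Fin n → K := fun i => rv i (y ((i : ℕ) + 1)) with hc'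
      have hyn : y n = x := by
        have hd : (List.ofFn f).drop n = [] := by
          apply List.drop_eq_nil_of_le; simp
        simp only [hy, hd, List.prod_nil, Module.End.one_apply]
      have step : ∀ k (hk : k < n), y k = y (k + 1) - c' ⟨k, hk⟩ • b ⟨k, hk⟩ := by
        intro k hk
        have hlen : k < (List.ofFn f).length := by simpa using hk
        have hd : (List.ofFn f).drop k = (List.ofFn f)[k] :: (List.ofFn f).drop (k + 1) :=
          List.drop_eq_getElem_cons hlen
        have hstep : y k = f ⟨k, hk⟩ (y (k + 1)) := by
          rw [hy]
          simp only [hd, List.prod_cons, Module.End.mul_apply, List.getElem_ofFn]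
        rw [hstep, hsl]
      have tele : ∀ d m, m + d = n →
          y m = x - ∑ i ∈ Finset.univ.filter (fun i : Fin n => m ≤ (i : ℕ)), c' i • b i := by
        intro d
        induction d with
        | zero =>
          intro m hm
          have hfil : Finset.univ.filter (fun i : Fin n => m ≤ (i : ℕ)) = ∅ := by
            ext i
            simp only [Finset.mem_filter, Finset.mem_univ, true_and,
              Finset.notMem_empty, iff_false]
            have := i.isLt; omega
          rw [hfil, Finset.sum_empty, sub_zero]
          have hmn : m = n := by omega
          rw [hmn]; exact hyn
        | succ d ih =>
          intro m hm
          have hk : m < n := by omega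
          have hins : Finset.univ.filter (fun i : Fin n => m ≤ (i : ℕ)) =
              insert ⟨m, hk⟩ (Finset.univ.filter (fun i : Fin n => m + 1 ≤ (i : ℕ))) := by
            ext i
            simp only [Finset.mem_filter, Finset.mem_univ, true_and, Finset.mem_insert]
            constructor
            · intro h
              rcases Nat.eq_or_lt_of_le h with h' | h'
              · left; exact Fin.ext h'.symm
              · right; omega
            · rintro (rfl | h)
              · exact le_refl m
              · omega
          have hnotmem : (⟨m, hk⟩ : Fin n) ∉
              Finset.univ.filter (fun i : Fin n => m + 1 ≤ (i : ℕ)) := by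
            simp
          rw [step m hk, ih (m + 1) (by omega), hins, Finset.sum_insert hnotmem]
          abel
      have hy0 : y 0 = x := by
        rw [hy]; simpa using hx
      have hsum : ∑ i, c' i • b i = 0 := by
        have ht := tele n 0 (by omega)
        rw [hy0] at ht
        have hfil : Finset.univ.filter (fun i : Fin n => 0 ≤ (i : ℕ)) = Finset.univ := by
          ext i; simp
        rw [hfil] at ht
        exact sub_eq_self.mp ht.symm
      have hczero : ∀ i, c' i = 0 :=
        Fintype.linearIndependent_iff.mp b.linearIndependent c' hsum
      have hyx : ∀ d m, m + d = n → y m = x := by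
        intro d
        induction d with
        | zero =>
          intro m hm
          have hmn : m = n := by omega
          rw [hmn]; exact hyn
        | succ d ih =>
          intro m hm
          have hk : m < n := by omega
          rw [step m hk, ih (m + 1) (by omega), hczero, zero_smul, sub_zero]
      intro i
      have hfix : y ((i : ℕ) + 1) = x := hyx (n - (i : ℕ) - 1) ((i : ℕ) + 1) (by omega)
      have hz := hczero i
      rw [hc'] at hz
      simp only at hz
      rw [hfix] at hz
      exact hz
    · intro hx
      have key : ∀ L : List (V →ₗ[K] V), (∀ g ∈ L, g x = x) → L.prod x = x := by
        intro L
        induction L with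
        | nil => intro _; simp
        | cons a t ih =>
          intro h
          rw [List.prod_cons, Module.End.mul_apply,
            ih (fun g hg => h g (List.mem_cons_of_mem a hg)), h a (List.mem_cons_self)]
      apply key
      intro g hg
      rcases Set.mem_range.mp ((List.mem_ofFn' _ _).mp hg) with ⟨i, rfl⟩
      rw [hsl, hx i, zero_smul, sub_zero]
  exact ⟨h1.trans h2.symm, h2⟩
end

section
/- Let (s_1,…,s_n) be complex reflections whose roots r_i form a basis of V with Cartan matrix C. An element g ∈ GL(V) commutes with every s_i if and only if g acts as a scalar on each subspace spanned by { r_i : i ∈ I } for every block I of C, where a block is a connected component of the graph on {1,…,n} with an edge (i,j) whenever C_{ij} ≠ 0 or C_{ji} ≠ 0. -/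
set_option synthInstance.maxHeartbeats 1000000
set_option maxHeartbeats 1000000

/-- An element `g ∈ GL(V)` commutes with all the reflections `s_i` iff it acts by
a scalar on the span of the roots of each block of the Cartan matrix `C`, where a
block is a connected component of the graph on `{1,…,n}` with an edge `(i,j)`
whenever `C_{ij} ≠ 0` or `C_{ji} ≠ 0`. -/
theorem commutes_iff_scalar_on_blocks (K : Subfield ℂ) (V : Type*) [AddCommGroup V]
    [Module K V] [FiniteDimensional K V] {n : ℕ}
    (b : Module.Basis (Fin n) K V) (s : Fin n → V ≃ₗ[K] V)
    (rv : Fin n → V →ₗ[K] K)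
    (hord : ∀ i, IsOfFinOrder (s i))
    (hs : ∀ i x, s i x = x - rv i x • b i)
    (hζ : ∀ i, rv i (b i) ≠ 0)
    (g : V ≃ₗ[K] V) :
    (∀ (i : Fin n) (x : V), g (s i x) = s i (g x)) ↔
      (∀ i : Fin n, ∃ μ : K, ∀ j : Fin n,
        Relation.EqvGen (fun i j : Fin n => rv i (b j) ≠ 0 ∨ rv j (b i) ≠ 0) i j →
          g (b j) = μ • b j) := by
  constructor
  · intro hcomm
    have key : ∀ i x, rv i x • g (b i) = rv i (g x) • b i := by
      intro i x
      have h := hcomm i x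
      rw [hs i x, hs i (g x), map_sub, map_smul, sub_right_inj] at h
      exact h
    set lam : Fin n → K := fun i => rv i (g (b i)) / rv i (b i) with hlam
    have hgb : ∀ i, g (b i) = lam i • b i := by
      intro i
      have h := key i (b i)
      have hne := hζ i
      have h2 : g (b i) = (rv i (b i))⁻¹ • (rv i (g (b i)) • b i) := by
        rw [← h, inv_smul_smul₀ hne]
      rw [h2, smul_smul, hlam]
      simp [div_eq_inv_mul]
    have hrv : ∀ i x, rv i (g x) = lam i * rv i x := by
      intro i x
      have h := key i x
      rw [hgb i, smul_smul] at h
      have h2 : (rv i x * lam i - rv i (g x)) • b i = 0 := by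
        rw [sub_smul, h, sub_self]
      rcases smul_eq_zero.mp h2 with h3 | h3
      · have := sub_eq_zero.mp h3
        rw [← this, mul_comm]
      · exact absurd h3 (b.ne_zero i)
    have hlameq : ∀ i j, Relation.EqvGen
        (fun i j : Fin n => rv i (b j) ≠ 0 ∨ rv j (b i) ≠ 0) i j → lam i = lam j := by
      intro i j h
      induction h with
      | rel i j hij =>
        rcases hij with h0 | h0
        · have h1 := hrv i (b j)
          rw [hgb j, map_smul, smul_eq_mul] at h1
          exact (mul_right_cancel₀ h0 h1).symm
        · have h1 := hrv j (b i)
          rw [hgb i, map_smul, smul_eq_mul] at h1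
          exact mul_right_cancel₀ h0 h1
      | refl i => rfl
      | symm _ _ _ ih => exact ih.symm
      | trans _ _ _ _ _ ih1 ih2 => exact ih1.trans ih2
    intro i
    exact ⟨lam i, fun j hij => by rw [hgb j, hlameq i j hij]⟩
  · intro h i x
    obtain ⟨μ, hμ⟩ := h i
    have hgi : g (b i) = μ • b i := hμ i (Relation.EqvGen.rel i i (Or.inl (hζ i)))
    have hrvx : ∀ x, rv i (g x) = μ * rv i x := by
      have hext : (rv i).comp (g : V →ₗ[K] V) = μ • rv i := by
        apply b.ext
        intro j
        simp only [LinearMap.comp_apply, LinearMap.smul_apply, smul_eq_mul,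
          LinearEquiv.coe_coe]
        by_cases hj : rv i (b j) = 0
        · obtain ⟨ν, hν⟩ := h j
          have hgj := hν j (Relation.EqvGen.rel j j (Or.inl (hζ j)))
          rw [hgj, map_smul, smul_eq_mul, hj, mul_zero, mul_zero]
        · have hgj := hμ j (Relation.EqvGen.rel i j (Or.inl hj))
          rw [hgj, map_smul, smul_eq_mul]
      intro x
      have := LinearMap.congr_fun hext x
      simpa using this
    rw [hs i x, hs i (g x), map_sub, map_smul, hgi, hrvx x, smul_smul, mul_comm]
end
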